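/- Let $(X,\mu)$ and $(Y,\nu)$ be $\sigma$-finite measure spaces with $(X,\mu)$ non-atomic, and let $D \subseteq X \times Y$ be measurable with $0 < (\mu\times\nu)(D) < \infty$. Then for every $\varepsilon>0$ there exist a measurable set $D_Y \subseteq Y$ and infinitely many pairwise disjoint measurable subsets $\{D_n\}_{n\in\mathbb{N}}$ of $X$ such that for all $n$, $(\mu\times\nu)((D_n \times D_Y)\setminus D) < \varepsilon \cdot (\mu\times\nu)(D_n\times D_Y) < \infty$. -/

import Mathlib

open MeasureTheory
open scoped ENNReal

/-- A measure is non-atomic if every measurable set of positive measure has a measurable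
subset of strictly smaller positive measure. -/
def NonAtomicMeasure {Z : Type*} [MeasurableSpace Z] (lam : Measure Z) : Prop :=
  ∀ s : Set Z, MeasurableSet s → 0 < lam s →
    ∃ t ⊆ s, MeasurableSet t ∧ 0 < lam t ∧ lam t < lam s

open Set
open scoped symmDiff

private lemma isSetSemiring_rect {α β : Type*} [MeasurableSpace α] [MeasurableSpace β] :
    IsSetSemiring (Set.image2 (· ×ˢ ·) {s : Set α | MeasurableSet s} {t : Set β | MeasurableSet t}) := by
  constructor
  · exact ⟨∅, MeasurableSet.empty, ∅, MeasurableSet.empty, by simp⟩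
  · rintro _ ⟨A₁, hA₁, B₁, hB₁, rfl⟩ _ ⟨A₂, hA₂, B₂, hB₂, rfl⟩
    exact ⟨A₁ ∩ A₂, hA₁.inter hA₂, B₁ ∩ B₂, hB₁.inter hB₂, (Set.prod_inter_prod).symm⟩
  · rintro _ ⟨A₁, hA₁, B₁, hB₁, rfl⟩ _ ⟨A₂, hA₂, B₂, hB₂, rfl⟩
    classical
    have hdisj : Disjoint ((A₁ \ A₂) ×ˢ B₁) ((A₁ ∩ A₂) ×ˢ (B₁ \ B₂)) := by
      rw [Set.disjoint_left]
      rintro ⟨x, y⟩ ⟨⟨hx1, hx2⟩, hy⟩ ⟨⟨hx1', hx2'⟩, hy'⟩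
      exact hx2 hx2'
    refine ⟨{(A₁ \ A₂) ×ˢ B₁, (A₁ ∩ A₂) ×ˢ (B₁ \ B₂)}, ?_, ?_, ?_⟩
    · intro w hw
      simp only [Finset.coe_insert, Finset.coe_singleton, Set.mem_insert_iff,
        Set.mem_singleton_iff] at hw
      rcases hw with rfl | rfl
      · exact ⟨A₁ \ A₂, hA₁.diff hA₂, B₁, hB₁, rfl⟩
      · exact ⟨A₁ ∩ A₂, hA₁.inter hA₂, B₁ \ B₂, hB₁.diff hB₂, rfl⟩
    · intro a ha b hb hne
      simp only [Finset.coe_insert, Finset.coe_singleton, Set.mem_insert_iff,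
        Set.mem_singleton_iff] at ha hb
      rcases ha with rfl | rfl <;> rcases hb with rfl | rfl
      · exact absurd rfl hne
      · exact hdisj
      · exact hdisj.symm
      · exact absurd rfl hne
    · ext ⟨x, y⟩
      simp only [Finset.coe_insert, Finset.coe_singleton, Set.sUnion_insert, Set.sUnion_singleton,
        Set.mem_diff, Set.mem_prod, Set.mem_union, Set.mem_inter_iff]
      tauto

private lemma mem_generateSetAlgebra_semiring {α : Type*} {C : Set (Set α)} (hC : IsSetSemiring C)
    (huniv : Set.univ ∈ C) {s : Set α} (hs : s ∈ generateSetAlgebra C) :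
    ∃ I : Finset (Set α), ↑I ⊆ C ∧ (I : Set (Set α)).PairwiseDisjoint id ∧ s = ⋃₀ ↑I := by
  classical
  set 𝒟 : Set (Set α) :=
    {u | ∃ I : Finset (Set α), ↑I ⊆ C ∧ (I : Set (Set α)).PairwiseDisjoint id ∧ u = ⋃₀ ↑I}
    with h𝒟
  have hinter : ∀ u ∈ 𝒟, ∀ v ∈ 𝒟, u ∩ v ∈ 𝒟 := by
    rintro u ⟨I, hI, hId, rfl⟩ v ⟨J, hJ, hJd, rfl⟩
    refine ⟨Finset.image₂ (· ∩ ·) I J, ?_, ?_, ?_⟩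
    · intro w hw
      simp only [Finset.coe_image₂, Set.mem_image2] at hw
      obtain ⟨a, ha, b, hb, rfl⟩ := hw
      exact hC.inter_mem a (hI ha) b (hJ hb)
    · intro w hw w' hw' hne
      simp only [Finset.coe_image₂, Set.mem_image2] at hw hw'
      obtain ⟨a, ha, b, hb, rfl⟩ := hw
      obtain ⟨a', ha', b', hb', rfl⟩ := hw'
      by_cases hab : a = a'
      · subst hab
        have hbb : b ≠ b' := by rintro rfl; exact hne rfl
        exact Disjoint.mono inf_le_right inf_le_right (hJd hb hb' hbb)
      · exact Disjoint.mono inf_le_left inf_le_left (hId ha ha' hab)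
    · ext x
      simp only [Set.mem_inter_iff, Set.mem_sUnion, Finset.coe_image₂, Set.mem_image2,
        Finset.mem_coe]
      constructor
      · rintro ⟨⟨a, ha, hxa⟩, ⟨b, hb, hxb⟩⟩
        exact ⟨a ∩ b, ⟨a, ha, b, hb, rfl⟩, hxa, hxb⟩
      · rintro ⟨w, ⟨a, ha, b, hb, rfl⟩, hxa, hxb⟩
        exact ⟨⟨a, ha, hxa⟩, ⟨b, hb, hxb⟩⟩
  have hcompl : ∀ u ∈ 𝒟, uᶜ ∈ 𝒟 := by
    rintro u ⟨I, hI, hId, rfl⟩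
    obtain ⟨J, hJ, hJd, heq⟩ := hC.exists_disjoint_finset_diff_eq huniv hI
    exact ⟨J, hJ, hJd, by rw [← heq, Set.compl_eq_univ_diff]⟩
  have halg : IsSetAlgebra 𝒟 := by
    refine ⟨⟨∅, by simp, by simp, by simp⟩, fun {u} hu => hcompl u hu, fun {u v} hu hv => ?_⟩
    have : u ∪ v = (uᶜ ∩ vᶜ)ᶜ := by rw [← Set.compl_union, compl_compl]
    rw [this]
    exact hcompl _ (hinter _ (hcompl _ hu) _ (hcompl _ hv))
  have hsub : C ⊆ 𝒟 := fun t ht => ⟨{t}, by simpa using ht, by simp, by simp⟩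
  exact IsSetAlgebra.generateSetAlgebra_subset hsub halg hs

/-- If `μ` is non-atomic, a set of finite positive product measure admits a measurable
`D_Y ⊆ Y` and infinitely many pairwise disjoint measurable subsets `D_n ⊆ X` such that
each rectangle `D_n × D_Y` is almost contained in `D` up to relative measure `ε`. -/
theorem almost_rectangles_of_nonatomic
    {X Y : Type*} [MeasurableSpace X] [MeasurableSpace Y]
    (μ : Measure X) (ν : Measure Y) [SigmaFinite μ] [SigmaFinite ν]
    (hμ : NonAtomicMeasure μ)
    (D : Set (X × Y)) (hD : MeasurableSet D)
    (hpos : 0 < (μ.prod ν) D) (hfin : (μ.prod ν) D < ⊤)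
    (ε : ℝ≥0∞) (hε : 0 < ε) :
    ∃ (DY : Set Y) (Dn : ℕ → Set X), MeasurableSet DY ∧
      (∀ n, MeasurableSet (Dn n)) ∧
      Pairwise (Function.onFun Disjoint Dn) ∧
      ∀ n, (μ.prod ν) ((Dn n ×ˢ DY) \ D) < ε * (μ.prod ν) (Dn n ×ˢ DY) ∧
        (μ.prod ν) (Dn n ×ˢ DY) < ⊤ := by
  classical
  set π := μ.prod ν with hπ
  -- choose a constant c with 0 < c ≤ 1, c < ∞, 2 * c < ε
  obtain ⟨c₀, hc₀0, hc₀lt⟩ := exists_between (lt_min hε zero_lt_one)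
  set c : ℝ≥0∞ := c₀ / 2 with hcdef
  have hc2 : 2 * c = c₀ := ENNReal.mul_div_cancel' (by norm_num) (by norm_num)
  have hc0 : 0 < c := ENNReal.div_pos hc₀0.ne' (by norm_num)
  have hc1 : c ≤ 1 := by
    calc c ≤ c₀ := by rw [← hc2]; exact le_mul_of_one_le_left zero_le one_le_two
    _ ≤ 1 := ((lt_min_iff.mp hc₀lt).2).le
  have hctop : c < ⊤ := lt_of_le_of_lt hc1 (by norm_num)
  have h2cε : 2 * c < ε := by rw [hc2]; exact (lt_min_iff.mp hc₀lt).1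
  -- the semiring of measurable rectangles
  set C : Set (Set (X × Y)) :=
    Set.image2 (· ×ˢ ·) {s : Set X | MeasurableSet s} {t : Set Y | MeasurableSet t} with hC
  have hCsemi : IsSetSemiring C := isSetSemiring_rect
  have hCuniv : Set.univ ∈ C :=
    ⟨Set.univ, MeasurableSet.univ, Set.univ, MeasurableSet.univ, Set.univ_prod_univ⟩
  have hCmeas : ∀ u ∈ C, MeasurableSet u := by
    rintro _ ⟨A, hA, B, hB, rfl⟩; exact hA.prod hB
  -- measure-dense approximation
  have hdense : π.MeasureDense (generateSetAlgebra C) :=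
    Measure.MeasureDense.of_generateFrom_isSetAlgebra_sigmaFinite
      isSetAlgebra_generateSetAlgebra
      ((μ.toFiniteSpanningSetsIn.prod ν.toFiniteSpanningSetsIn).mono
        self_subset_generateSetAlgebra)
      (by rw [generateFrom_generateSetAlgebra_eq]; exact generateFrom_prod.symm)
  -- choose δ
  set δh : ℝ≥0∞ := c * π D / 2 with hδh
  have hδh0 : δh ≠ 0 := by
    simp only [hδh]
    exact (ENNReal.div_pos (ENNReal.mul_pos hc0.ne' hpos.ne').ne' (by norm_num)).ne'
  have hδhtop : δh < ⊤ := by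
    refine ENNReal.div_lt_top ?_ (by norm_num)
    exact (ENNReal.mul_lt_top hctop hfin).ne
  obtain ⟨s, hsgen, hsclose⟩ :=
    hdense.approx D hD hfin.ne δh.toReal (ENNReal.toReal_pos hδh0 hδhtop.ne)
  rw [ENNReal.ofReal_toReal hδhtop.ne] at hsclose
  have hsD : π (s \ D) < δh := lt_of_le_of_lt (measure_mono (by
    rw [Set.symmDiff_def]; exact subset_union_right)) hsclose
  have hDs : π (D \ s) < δh := lt_of_le_of_lt (measure_mono (by
    rw [Set.symmDiff_def]; exact subset_union_left)) hsclose
  -- decompose s into disjoint rectangles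
  obtain ⟨I, hIC, hIdisj, rfl⟩ := mem_generateSetAlgebra_semiring hCsemi hCuniv hsgen
  have hsmeas : ∀ R ∈ I, MeasurableSet R := fun R hR => hCmeas R (hIC hR)
  have hsUnion_eq : ⋃₀ (I : Set (Set (X × Y))) = ⋃ R ∈ I, R := Set.sUnion_eq_biUnion
  have hπs : π (⋃₀ (I : Set (Set (X × Y)))) = ∑ R ∈ I, π R := by
    rw [hsUnion_eq]
    exact measure_biUnion_finset hIdisj hsmeas
  have hπsD : π ((⋃₀ (I : Set (Set (X × Y)))) \ D) = ∑ R ∈ I, π (R \ D) := by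
    have : (⋃₀ (I : Set (Set (X × Y)))) \ D = ⋃ R ∈ I, (R \ D) := by
      rw [hsUnion_eq]; ext x; simp [Set.mem_diff]; tauto
    rw [this]
    refine measure_biUnion_finset (fun a ha b hb hne => ?_) (fun R hR => (hsmeas R hR).diff hD)
    exact (hIdisj ha hb hne).mono diff_subset diff_subset
  -- pigeonhole: find a good rectangle
  have hgood : ∃ R ∈ I, π (R \ D) < c * π R := by
    by_contra hcon
    push_neg at hcon
    have h1 : c * π (⋃₀ (I : Set (Set (X × Y)))) ≤ π ((⋃₀ (I : Set (Set (X × Y)))) \ D) := by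
      rw [hπs, hπsD, Finset.mul_sum]
      exact Finset.sum_le_sum fun R hR => hcon R hR
    have h2 : π D ≤ π (⋃₀ (I : Set (Set (X × Y)))) + π (D \ ⋃₀ (I : Set (Set (X × Y)))) := by
      refine (measure_le_inter_add_diff π D (⋃₀ (I : Set (Set (X × Y))))).trans ?_
      exact add_le_add_left (measure_mono Set.inter_subset_right) _
    have h3 : c * π D < δh + δh := by
      calc c * π D ≤ c * π (⋃₀ (I : Set (Set (X × Y)))) + c * π (D \ ⋃₀ (I : Set (Set (X × Y)))) := by
            rw [← mul_add]; exact mul_le_mul_right h2 c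
        _ < δh + δh := by
            refine ENNReal.add_lt_add_of_le_of_lt ((h1.trans hsD.le).trans_lt hδhtop).ne
              (h1.trans hsD.le) ?_
            exact lt_of_le_of_lt (mul_le_of_le_one_left zero_le hc1) hDs
    rw [hδh, ENNReal.add_halves] at h3
    exact lt_irrefl _ h3
  obtain ⟨R, hRI, hRgood⟩ := hgood
  have hRpos : 0 < π R := by
    by_contra h
    push_neg at h
    have h0 : π R = 0 := le_antisymm h zero_le
    rw [h0, mul_zero] at hRgood
    exact absurd hRgood (by simp [le_antisymm (le_trans (measure_mono diff_subset) h0.le) zero_le])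
  have hRfin : π R < ⊤ := by
    refine lt_of_le_of_lt (measure_mono (Set.subset_sUnion_of_mem hRI)) ?_
    calc π (⋃₀ (I : Set (Set (X × Y)))) ≤ π D + π ((⋃₀ (I : Set (Set (X × Y)))) \ D) := by
          refine (measure_le_inter_add_diff π (⋃₀ (I : Set (Set (X × Y)))) D).trans ?_
          exact add_le_add_left (measure_mono Set.inter_subset_right) _
      _ < ⊤ := ENNReal.add_lt_top.mpr ⟨hfin, hsD.trans hδhtop⟩
  obtain ⟨A, hAmeas, B, hBmeas, rfl⟩ := hIC hRI
  rw [Measure.prod_prod] at hRpos hRfin hRgood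
  have hA0 : μ A ≠ 0 := fun h => by simp [h] at hRpos
  have hB0 : ν B ≠ 0 := fun h => by simp [h] at hRpos
  have hAtop : μ A ≠ ⊤ := fun h => by simp [h, ENNReal.top_mul hB0] at hRfin
  have hBtop : ν B ≠ ⊤ := by
    intro h
    rw [h, ENNReal.mul_top hA0] at hRfin
    exact absurd hRfin (lt_irrefl _)
  -- sections of the bad part of the rectangle
  set E : Set (X × Y) := (A ×ˢ B) \ D with hE
  have hEmeas : MeasurableSet E := (hAmeas.prod hBmeas).diff hD
  set f : X → ℝ≥0∞ := fun x => ν (Prod.mk x ⁻¹' E) with hf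
  have hfmeas : Measurable f := measurable_measure_prodMk_left hEmeas
  have hintf : ∫⁻ x, f x ∂μ = π E := (Measure.prod_apply hEmeas).symm
  set t : ℝ≥0∞ := 2 * c * ν B with ht
  have ht0 : t ≠ 0 := by
    simp only [ht]
    exact (ENNReal.mul_pos (ENNReal.mul_pos (by norm_num) hc0.ne').ne' hB0).ne'
  have httop : t ≠ ⊤ := by
    simp only [ht]
    exact (ENNReal.mul_lt_top (ENNReal.mul_lt_top (by norm_num) hctop) hBtop.lt_top).ne
  set S : Set X := {x | t ≤ f x} with hS
  have hSmeas : MeasurableSet S := measurableSet_le measurable_const hfmeas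
  have hSsmall : μ S < μ A := by
    have hmarkov : t * μ S ≤ π E := by
      rw [← hintf]
      exact mul_meas_ge_le_lintegral₀ hfmeas.aemeasurable t
    have hlt : t * μ S < t * μ A := by
      refine lt_of_le_of_lt hmarkov (lt_of_lt_of_le hRgood ?_)
      have : c * (μ A * ν B) < 2 * (c * (μ A * ν B)) := by
        nth_rewrite 1 [← one_mul (c * (μ A * ν B))]
        refine ENNReal.mul_lt_mul_left ?_ ?_ ENNReal.one_lt_two
        · exact (ENNReal.mul_pos hc0.ne' (ENNReal.mul_pos hA0 hB0).ne').ne'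
        · exact (ENNReal.mul_lt_top hctop
            (ENNReal.mul_lt_top hAtop.lt_top hBtop.lt_top)).ne
      refine this.le.trans (le_of_eq ?_)
      rw [ht]; ring
    exact (ENNReal.mul_lt_mul_iff_right ht0 httop).mp hlt
  set A' : Set X := A \ S with hA'
  have hA'meas : MeasurableSet A' := hAmeas.diff hSmeas
  have hA'pos : 0 < μ A' := by
    rcases eq_or_lt_of_le (zero_le : 0 ≤ μ A') with h0 | h
    · exfalso
      have : μ A ≤ μ A' + μ S := by
        refine (measure_mono ?_).trans (measure_union_le _ _)
        intro x hx
        by_cases hxS : x ∈ S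
        · exact Or.inr hxS
        · exact Or.inl ⟨hx, hxS⟩
      rw [← h0, zero_add] at this
      exact absurd (lt_of_le_of_lt this hSsmall) (lt_irrefl _)
    · exact h
  have hA'fin : μ A' < ⊤ := lt_of_le_of_lt (measure_mono diff_subset) hAtop.lt_top
  have hA'sub : A' ⊆ A := diff_subset
  have hA'f : ∀ x ∈ A', f x < t := fun x hx => not_le.mp hx.2
  -- recursively split A' into infinitely many disjoint pieces
  set P : Set X → Prop := fun u => MeasurableSet u ∧ 0 < μ u ∧ μ u < ⊤ with hP
  set pick : Set X → Set X := fun u =>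
    if h : P u then (hμ u h.1 h.2.1).choose else ∅ with hpick
  have pick_spec : ∀ u, P u →
      pick u ⊆ u ∧ MeasurableSet (pick u) ∧ 0 < μ (pick u) ∧ μ (pick u) < μ u := by
    intro u hu
    simp only [hpick, dif_pos hu]
    exact (hμ u hu.1 hu.2.1).choose_spec
  set sq : ℕ → Set X := fun n => Nat.rec A' (fun _ u => u \ pick u) n with hsq
  have sq_zero : sq 0 = A' := rfl
  have sq_succ : ∀ n, sq (n + 1) = sq n \ pick (sq n) := fun n => rfl
  have hPsq : ∀ n, P (sq n) ∧ sq n ⊆ A' := by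
    intro n
    induction n with
    | zero => exact ⟨⟨hA'meas, hA'pos, hA'fin⟩, subset_rfl⟩
    | succ n ih =>
      obtain ⟨⟨hm, hp, hfin'⟩, hsub⟩ := ih
      obtain ⟨h1, h2, h3, h4⟩ := pick_spec _ ⟨hm, hp, hfin'⟩
      refine ⟨⟨hm.diff h2, ?_, lt_of_le_of_lt (measure_mono diff_subset) hfin'⟩,
        (diff_subset.trans hsub : _)⟩
      rw [sq_succ, measure_diff h1 h2.nullMeasurableSet (h4.trans hfin').ne]
      exact tsub_pos_iff_lt.mpr h4
  set Dn : ℕ → Set X := fun n => pick (sq n) with hDn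
  have hDnspec : ∀ n, Dn n ⊆ sq n ∧ MeasurableSet (Dn n) ∧ 0 < μ (Dn n) ∧ μ (Dn n) < μ (sq n) :=
    fun n => pick_spec _ (hPsq n).1
  have sq_anti : ∀ m n, m ≤ n → sq n ⊆ sq m := by
    intro m n hmn
    induction n with
    | zero => rw [Nat.le_zero.mp hmn]
    | succ n ih =>
      rcases Nat.lt_or_ge m (n + 1) with h | h
      · exact (sq_succ n ▸ diff_subset).trans (ih (Nat.lt_succ_iff.mp h))
      · rw [Nat.le_antisymm hmn h]
  have hdisj : Pairwise (Function.onFun Disjoint Dn) := by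
    have key : ∀ m n, m < n → Disjoint (Dn m) (Dn n) := by
      intro m n hmn
      have h1 : Dn n ⊆ sq m \ Dn m := by
        refine ((hDnspec n).1.trans (sq_anti (m + 1) n hmn)).trans ?_
        rw [sq_succ m]
      exact (disjoint_sdiff_right.mono_right h1).symm.symm
    intro m n hmn
    rcases hmn.lt_or_gt with h | h
    · exact key m n h
    · exact (key n m h).symm
  -- final verification
  refine ⟨B, Dn, hBmeas, fun n => (hDnspec n).2.1, hdisj, fun n => ?_⟩
  have hDnA' : Dn n ⊆ A' := (hDnspec n).1.trans (hPsq n).2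
  have hDnpos : 0 < μ (Dn n) := (hDnspec n).2.2.1
  have hDnfin : μ (Dn n) < ⊤ := lt_of_le_of_lt (measure_mono (hDnA'.trans hA'sub)) hAtop.lt_top
  have hprodval : π (Dn n ×ˢ B) = μ (Dn n) * ν B := by rw [hπ]; exact Measure.prod_prod _ _
  have hprodfin : π (Dn n ×ˢ B) < ⊤ := by
    rw [hprodval]; exact ENNReal.mul_lt_top hDnfin hBtop.lt_top
  refine ⟨?_, hprodfin⟩
  have hrectmeas : MeasurableSet ((Dn n ×ˢ B) \ D) := ((hDnspec n).2.1.prod hBmeas).diff hD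
  have hbound : π ((Dn n ×ˢ B) \ D) ≤ t * μ (Dn n) := by
    rw [Measure.prod_apply hrectmeas]
    have hle : ∀ x, ν (Prod.mk x ⁻¹' ((Dn n ×ˢ B) \ D)) ≤ (Dn n).indicator (fun _ => t) x := by
      intro x
      by_cases hx : x ∈ Dn n
      · rw [Set.indicator_of_mem hx]
        have hsub2 : Prod.mk x ⁻¹' ((Dn n ×ˢ B) \ D) ⊆ Prod.mk x ⁻¹' E := by
          intro y hy
          obtain ⟨⟨hy1, hy2⟩, hy3⟩ := hy
          exact ⟨⟨hA'sub (hDnA' hx), hy2⟩, hy3⟩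
        exact le_trans (measure_mono hsub2) (hA'f x (hDnA' hx)).le
      · rw [Set.indicator_of_notMem hx]
        have : Prod.mk x ⁻¹' ((Dn n ×ˢ B) \ D) = ∅ := by
          ext y; simp only [Set.mem_preimage, Set.mem_diff, Set.mem_prod, Set.mem_empty_iff_false,
            iff_false]
          rintro ⟨⟨hy1, _⟩, _⟩; exact hx hy1
        rw [this]; exact (measure_empty).le
    calc ∫⁻ x, ν (Prod.mk x ⁻¹' ((Dn n ×ˢ B) \ D)) ∂μ
        ≤ ∫⁻ x, (Dn n).indicator (fun _ => t) x ∂μ := lintegral_mono hle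
      _ = t * μ (Dn n) := lintegral_indicator_const (hDnspec n).2.1 t
  refine lt_of_le_of_lt hbound ?_
  rw [hprodval]
  calc t * μ (Dn n) = (2 * c) * (μ (Dn n) * ν B) := by rw [ht]; ring
    _ < ε * (μ (Dn n) * ν B) := by
        refine ENNReal.mul_lt_mul_left ?_ ?_ h2cε |>.trans_le (le_of_eq (by ring))
        · exact (ENNReal.mul_pos hDnpos.ne' hB0).ne'
        · exact (ENNReal.mul_lt_top hDnfin hBtop.lt_top).ne
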